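/- arXiv:1409.1549 — 5 statements merged into one kernel-verified Lean document; each statement's English description precedes it below -/
import Mathlib

section
/- Let P be a right LCM monoid. Define an equivalence relation on P × P by (p,q) ∼ (a,b) iff there exists a unit u ∈ U(P) with au = p and bu = q. Then the multiplication [a,b][c,d] = [ab', dc'] when cP ∩ bP = rP with bb' = cc' = r, and [a,b][c,d] = 0 when cP ∩ bP = ∅, is well-defined on equivalence classes. -/
/-- The principal right ideal `pP` of a monoid. -/
def rI {M : Type*} [Monoid M] (p : M) : Set M := {x | ∃ y, x = p * y}

/-- A right LCM monoid: left cancellative, and any two principal right ideals are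
either disjoint or intersect in another principal right ideal. -/
class RightLCM (M : Type*) extends Monoid M where
  mul_left_cancel' : ∀ a b c : M, a * b = a * c → b = c
  lcm : ∀ p q : M, rI p ∩ rI q = ∅ ∨ ∃ r : M, rI p ∩ rI q = rI r

namespace RightLCM

variable {M : Type*} [RightLCM M]

/-- The equivalence relation `(p,q) ∼ (pu,qu)` for units `u`. -/
def peq (x y : M × M) : Prop := ∃ u : M, IsUnit u ∧ x.1 = y.1 * u ∧ x.2 = y.2 * u

theorem peq_equivalence : Equivalence (peq (M := M)) := by
  constructor
  · intro x; exact ⟨1, isUnit_one, by simp, by simp⟩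
  · rintro x y ⟨u, hu, h1, h2⟩
    obtain ⟨w, hw⟩ := hu
    subst hw
    exact ⟨↑w⁻¹, Units.isUnit _, by rw [h1, mul_assoc, w.mul_inv, mul_one],
      by rw [h2, mul_assoc, w.mul_inv, mul_one]⟩
  · rintro x y z ⟨u, hu, h1, h2⟩ ⟨v, hv, h3, h4⟩
    exact ⟨v * u, hv.mul hu, by rw [h1, h3, mul_assoc], by rw [h2, h4, mul_assoc]⟩

instance pSetoid : Setoid (M × M) := ⟨peq, peq_equivalence⟩

/-- The inverse semigroup `S = {[p,q] : p,q ∈ P} ∪ {0}` associated to a right LCM monoid. -/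
abbrev S (M : Type*) [RightLCM M] := WithZero (Quotient (pSetoid (M := M)))

/-- The class `[p,q]` as an element of `S M`. -/
def cls (p q : M) : S M := (Quotient.mk (pSetoid (M := M)) (p, q) : Quotient (pSetoid (M := M)))

open scoped Classical in
/-- Product of two representatives: `[a,b][c,d] = [ab', dc']` when `bP ∩ cP = rP` with
`bb' = cc' = r`, and `0` when `bP ∩ cP = ∅`. -/
noncomputable def mulPair (x y : M × M) : S M :=
  if h : rI x.2 ∩ rI y.1 = ∅ then 0
  else
    have hr := (RightLCM.lcm x.2 y.1).resolve_left h
    have hmem : Classical.choose hr ∈ rI x.2 ∩ rI y.1 :=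
      (Set.ext_iff.mp (Classical.choose_spec hr) _).mpr ⟨1, (mul_one _).symm⟩
    cls (x.1 * Classical.choose hmem.1) (y.2 * Classical.choose hmem.2)

/-- The multiplication on `S M` (with `0` absorbing). -/
noncomputable def smul : S M → S M → S M
  | none, _ => 0
  | some _, none => 0
  | some a, some b => mulPair a.out b.out

/-- The involution `[p,q]* = [q,p]` on `S M`. -/
noncomputable def star : S M → S M
  | none => 0
  | some a => cls a.out.2 a.out.1

end RightLCM

namespace RightLCM

variable {M : Type*} [RightLCM M]

lemma rI_mul_unit {p u : M} (hu : IsUnit u) : rI (p * u) = rI p := by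
  obtain ⟨w, rfl⟩ := hu
  ext x
  constructor
  · rintro ⟨y, rfl⟩; exact ⟨w * y, by rw [mul_assoc]⟩
  · rintro ⟨y, rfl⟩; exact ⟨(w⁻¹ : Mˣ) * y, by
      rw [mul_assoc, ← mul_assoc (w : M), w.mul_inv, one_mul]⟩

lemma unit_of_rI_eq {r r' : M} (h : rI r = rI r') : ∃ s : M, IsUnit s ∧ r = r' * s := by
  have h1 : r ∈ rI r' := h ▸ ⟨1, (mul_one r).symm⟩
  have h2 : r' ∈ rI r := h.symm ▸ ⟨1, (mul_one r').symm⟩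
  obtain ⟨s, hs⟩ := h1
  obtain ⟨t, ht⟩ := h2
  have hst : s * t = 1 := mul_left_cancel' r' _ _ (by
    rw [← mul_assoc, ← hs, ← ht, mul_one])
  have hts : t * s = 1 := mul_left_cancel' r _ _ (by
    rw [← mul_assoc, ← ht, ← hs, mul_one])
  exact ⟨s, ⟨⟨s, t, hst, hts⟩, rfl⟩, hs⟩

lemma mulPair_spec (x y : M × M) (h : ¬ rI x.2 ∩ rI y.1 = ∅) :
    ∃ r b c : M, r = x.2 * b ∧ r = y.1 * c ∧ rI x.2 ∩ rI y.1 = rI r ∧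
      mulPair x y = cls (x.1 * b) (y.2 * c) := by
  have hr := (RightLCM.lcm x.2 y.1).resolve_left h
  have hmem : Classical.choose hr ∈ rI x.2 ∩ rI y.1 :=
    (Set.ext_iff.mp (Classical.choose_spec hr) _).mpr ⟨1, (mul_one _).symm⟩
  refine ⟨Classical.choose hr, Classical.choose hmem.1, Classical.choose hmem.2,
    Classical.choose_spec hmem.1, Classical.choose_spec hmem.2,
    Classical.choose_spec hr, ?_⟩
  unfold mulPair
  rw [dif_neg h]

lemma cls_eq_of_peq {p q p' q' : M} (h : peq (p, q) (p', q')) : cls p q = cls p' q' :=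
  congrArg _ (Quotient.sound h)

end RightLCM

open RightLCM in
/-- The multiplication `[a,b][c,d] = [ab', dc']` (resp. `0`) is well-defined on
equivalence classes of pairs. -/
theorem stmt2 {M : Type*} [RightLCM M] (x x' y y' : M × M)
    (hx : peq x x') (hy : peq y y') :
    mulPair x y = mulPair x' y' := by
  obtain ⟨u, hu, hx1, hx2⟩ := hx
  obtain ⟨v, hv, hy1, hy2⟩ := hy
  have e1 : rI x.2 = rI x'.2 := by rw [hx2]; exact rI_mul_unit hu
  have e2 : rI y.1 = rI y'.1 := by rw [hy1]; exact rI_mul_unit hv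
  by_cases h : rI x.2 ∩ rI y.1 = ∅
  · have h' : rI x'.2 ∩ rI y'.1 = ∅ := by rw [← e1, ← e2]; exact h
    unfold mulPair
    rw [dif_pos h, dif_pos h']
  · have h' : ¬ rI x'.2 ∩ rI y'.1 = ∅ := by rw [← e1, ← e2]; exact h
    obtain ⟨r, b, c, hb, hc, hrI, heq⟩ := mulPair_spec x y h
    obtain ⟨r', b', c', hb', hc', hrI', heq'⟩ := mulPair_spec x' y' h'
    rw [heq, heq']
    have hrr' : rI r = rI r' := by rw [← hrI, ← hrI', e1, e2]
    obtain ⟨s, hs, hrs⟩ := unit_of_rI_eq hrr'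
    apply cls_eq_of_peq
    refine ⟨s, hs, ?_, ?_⟩
    · -- x.1 * b = x'.1 * b' * s
      have : x'.2 * (u * b) = x'.2 * (b' * s) := by
        rw [← mul_assoc, ← hx2, ← hb, hrs, hb', mul_assoc]
      have hub : u * b = b' * s := mul_left_cancel' _ _ _ this
      show x.1 * b = x'.1 * b' * s
      rw [hx1, mul_assoc, mul_assoc, hub]
    · -- y.2 * c = y'.2 * c' * s
      have : y'.1 * (v * c) = y'.1 * (c' * s) := by
        rw [← mul_assoc, ← hy1, ← hc, hrs, hc', mul_assoc]
      have hvc : v * c = c' * s := mul_left_cancel' _ _ _ this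
      show y.2 * c = y'.2 * c' * s
      rw [hy2, mul_assoc, mul_assoc, hvc]
end

section
/- Let P be a right LCM monoid with core P_0. If p, q ∈ P_0 and pP ∩ qP = rP, then r ∈ P_0. -/
/-- The core of a monoid: elements whose principal right ideal meets every
principal right ideal. -/
def core (M : Type*) [Monoid M] : Set M := {p | ∀ q : M, (rI p ∩ rI q).Nonempty}

/-- In a right LCM monoid, if `p, q` are in the core and `pP ∩ qP = rP`, then `r`
is in the core. -/
theorem stmt8 {M : Type*} [Monoid M]
    (hlc : ∀ a b c : M, a * b = a * c → b = c)
    (hlcm : ∀ p q : M, rI p ∩ rI q = ∅ ∨ ∃ t : M, rI p ∩ rI q = rI t) :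
    ∀ p ∈ core M, ∀ q ∈ core M, ∀ r : M, rI p ∩ rI q = rI r → r ∈ core M := by
  intro p hp q hq r hr s
  rcases hlcm p s with h | ⟨t, ht⟩
  · exact absurd (hp s) (by simp [h, Set.not_nonempty_empty])
  · rcases hq t with ⟨x, hxq, hxt⟩
    have hx : x ∈ rI p ∩ rI s := ht ▸ hxt
    have : x ∈ rI r := hr ▸ ⟨hx.1, hxq⟩
    exact ⟨x, this, hx.2⟩
end

section
/- Let S be an inverse semigroup with zero. The set S_0 := {s ∈ S : s*s e ≠ 0 and ss* e ≠ 0 for all nonzero idempotents e} is closed under multiplication and under the inverse operation, hence is an inverse subsemigroup of S. -/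
/-- double inverse -/
theorem aux_inv_inv {S : Type*} [Semigroup S] (inv : S → S)
    (hinv : ∀ s : S, s * inv s * s = s ∧ inv s * s * inv s = inv s)
    (huniq : ∀ s t : S, s * t * s = s → t * s * t = t → t = inv s)
    (s : S) : inv (inv s) = s :=
  (huniq (inv s) s (hinv s).2 (hinv s).1).symm

/-- inverse of an idempotent -/
theorem aux_inv_idem {S : Type*} [Semigroup S] (inv : S → S)
    (huniq : ∀ s t : S, s * t * s = s → t * s * t = t → t = inv s)
    {e : S} (he : e * e = e) : inv e = e :=
  (huniq e e (by rw [he, he]) (by rw [he, he])).symm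

/-- product of idempotents is idempotent -/
theorem aux_idem_mul {S : Type*} [Semigroup S] (inv : S → S)
    (hinv : ∀ s : S, s * inv s * s = s ∧ inv s * s * inv s = inv s)
    (huniq : ∀ s t : S, s * t * s = s → t * s * t = t → t = inv s)
    {e f : S} (he : e * e = e) (hf : f * f = f) :
    (e * f) * (e * f) = e * f := by
  have dupe : ∀ y : S, e * (e * y) = e * y := fun y => by rw [← mul_assoc, he]
  have dupf : ∀ y : S, f * (f * y) = f * y := fun y => by rw [← mul_assoc, hf]
  set x := inv (e * f) with hxdef
  have h1 : (e * f) * x * (e * f) = e * f := (hinv _).1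
  have h2 : x * (e * f) * x = x := (hinv _).2
  simp only [mul_assoc] at h1 h2
  have hA : (e * f) * (f * x * e) * (e * f) = e * f := by
    simp only [mul_assoc, dupf, dupe]
    rw [← mul_assoc x e, ← mul_assoc f (x*e), ← mul_assoc e (f*(x*e))]
    simp only [mul_assoc]
    exact h1
  have hB : (f * x * e) * (e * f) * (f * x * e) = f * x * e := by
    simp only [mul_assoc, dupe, dupf]
    rw [show x * (e * (f * (x * e))) = (x * (e * (f * x))) * e by
      simp only [mul_assoc], h2]
  have hx : f * x * e = x := huniq (e * f) (f * x * e) hA hB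
  have hxx : x * x = x := by
    conv_lhs => rw [← hx]
    simp only [mul_assoc, dupe]
    rw [show x * (e * (f * (x * e))) = (x * (e * (f * x))) * e by
      simp only [mul_assoc], h2, show f * (x * e) = f * x * e by rw [mul_assoc], hx]
  have hix : inv x = x := aux_inv_idem inv huniq hxx
  have h3 : inv x = e * f := by rw [hxdef, aux_inv_inv inv hinv huniq]
  rw [show e * f = x by rw [← hix]; exact h3.symm]
  exact hxx

/-- idempotents commute -/
theorem aux_comm {S : Type*} [Semigroup S] (inv : S → S)
    (hinv : ∀ s : S, s * inv s * s = s ∧ inv s * s * inv s = inv s)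
    (huniq : ∀ s t : S, s * t * s = s → t * s * t = t → t = inv s)
    {e f : S} (he : e * e = e) (hf : f * f = f) :
    e * f = f * e := by
  have hef := aux_idem_mul inv hinv huniq he hf
  have hfe := aux_idem_mul inv hinv huniq hf he
  have dupe : ∀ y : S, e * (e * y) = e * y := fun y => by rw [← mul_assoc, he]
  have dupf : ∀ y : S, f * (f * y) = f * y := fun y => by rw [← mul_assoc, hf]
  have h1 : f * e = inv (e * f) := by
    apply huniq
    · simp only [mul_assoc] at hef
      simp only [mul_assoc, dupf, dupe]
      exact hef
    · simp only [mul_assoc] at hfe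
      simp only [mul_assoc, dupe, dupf]
      exact hfe
  rw [h1, aux_inv_idem inv huniq hef]

/-- For an inverse semigroup `S` with zero (a semigroup with absorbing `0` in which
every element `s` has a unique generalized inverse `inv s`), the core
`S₀ = {s : s*s e ≠ 0 and ss* e ≠ 0 for every nonzero idempotent e}` is closed under
multiplication and the inverse operation, hence is an inverse subsemigroup. -/
theorem stmt13 {S : Type*} [Semigroup S] [Zero S]
    (hz : ∀ s : S, 0 * s = 0 ∧ s * 0 = 0)
    (inv : S → S)
    (hinv : ∀ s : S, s * inv s * s = s ∧ inv s * s * inv s = inv s)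
    (huniq : ∀ s t : S, s * t * s = s → t * s * t = t → t = inv s)
    (S0 : Set S)
    (hS0 : S0 = {s : S | ∀ e : S, e * e = e → e ≠ 0 →
      inv s * s * e ≠ 0 ∧ s * inv s * e ≠ 0}) :
    (∀ s ∈ S0, ∀ t ∈ S0, s * t ∈ S0) ∧ (∀ s ∈ S0, inv s ∈ S0) := by
  have hii := aux_inv_inv inv hinv huniq
  have hcomm : ∀ {e f : S}, e * e = e → f * f = f → e * f = f * e :=
    fun he hf => aux_comm inv hinv huniq he hf
  have hidss : ∀ s : S, (inv s * s) * (inv s * s) = inv s * s := fun s => by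
    rw [← mul_assoc, (hinv s).2]
  have hidss' : ∀ s : S, (s * inv s) * (s * inv s) = s * inv s := fun s => by
    rw [← mul_assoc, (hinv s).1]
  have hz3 : ∀ a b c : S, b = 0 → a * b * c = 0 := fun a b c h => by
    rw [h, (hz a).2, (hz c).1]
  have hconj_idem : ∀ (s e : S), e * e = e →
      (s * e * inv s) * (s * e * inv s) = s * e * inv s := by
    intro s e he
    calc (s * e * inv s) * (s * e * inv s)
        = s * ((e * (inv s * s)) * (e * inv s)) := by simp only [mul_assoc]
      _ = s * (((inv s * s) * e) * (e * inv s)) := by rw [hcomm he (hidss s)]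
      _ = (s * inv s * s) * (e * (e * inv s)) := by simp only [mul_assoc]
      _ = s * (e * (e * inv s)) := by rw [(hinv s).1]
      _ = s * e * inv s := by
          rw [show e * (e * inv s) = e * inv s by rw [← mul_assoc, he], ← mul_assoc]
  -- core elements conjugate nonzero idempotents to nonzero elements
  have hcne : ∀ s : S, (∀ e : S, e * e = e → e ≠ 0 →
      inv s * s * e ≠ 0 ∧ s * inv s * e ≠ 0) →
      ∀ e : S, e * e = e → e ≠ 0 → s * e * inv s ≠ 0 ∧ inv s * e * s ≠ 0 := by
    intro s hs e he hne
    constructor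
    · intro h0
      have key : inv s * s * e = 0 := by
        have h1 : inv s * (s * e * inv s) * s = 0 := hz3 _ _ _ h0
        calc inv s * s * e = ((inv s * s) * (inv s * s)) * e := by rw [hidss]
          _ = (inv s * s) * ((inv s * s) * e) := by simp only [mul_assoc]
          _ = (inv s * s) * (e * (inv s * s)) := by rw [hcomm (hidss s) he]
          _ = inv s * (s * e * inv s) * s := by simp only [mul_assoc]
          _ = 0 := h1
      exact (hs e he hne).1 key
    · intro h0
      have key : s * inv s * e = 0 := by
        have h1 : s * (inv s * e * s) * inv s = 0 := hz3 _ _ _ h0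
        calc s * inv s * e = ((s * inv s) * (s * inv s)) * e := by rw [hidss']
          _ = (s * inv s) * ((s * inv s) * e) := by simp only [mul_assoc]
          _ = (s * inv s) * (e * (s * inv s)) := by rw [hcomm (hidss' s) he]
          _ = s * (inv s * e * s) * inv s := by simp only [mul_assoc]
          _ = 0 := h1
      exact (hs e he hne).2 key
  have hinvmul : ∀ s t : S, inv (s * t) = inv t * inv s := by
    intro s t
    refine (huniq (s * t) (inv t * inv s) ?_ ?_).symm
    · calc (s * t) * (inv t * inv s) * (s * t)
          = s * ((t * inv t) * (inv s * s)) * t := by simp only [mul_assoc]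
        _ = s * ((inv s * s) * (t * inv t)) * t := by rw [hcomm (hidss' t) (hidss s)]
        _ = (s * inv s * s) * (t * inv t * t) := by simp only [mul_assoc]
        _ = s * t := by rw [(hinv s).1, (hinv t).1]
    · calc (inv t * inv s) * (s * t) * (inv t * inv s)
          = inv t * ((inv s * s) * (t * inv t)) * inv s := by simp only [mul_assoc]
        _ = inv t * ((t * inv t) * (inv s * s)) * inv s := by
            rw [hcomm (hidss s) (hidss' t)]
        _ = (inv t * t * inv t) * (inv s * s * inv s) := by simp only [mul_assoc]
        _ = inv t * inv s := by rw [(hinv t).2, (hinv s).2]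
  have gen1 : ∀ r e : S, r * (inv r * r * e) * inv r = r * e * inv r := by
    intro r e
    calc r * (inv r * r * e) * inv r = (r * inv r * r) * (e * inv r) := by
          simp only [mul_assoc]
      _ = r * (e * inv r) := by rw [(hinv r).1]
      _ = r * e * inv r := by rw [mul_assoc]
  have gen2 : ∀ r e : S, inv r * (r * inv r * e) * r = inv r * e * r := by
    intro r e
    calc inv r * (r * inv r * e) * r = (inv r * r * inv r) * (e * r) := by
          simp only [mul_assoc]
      _ = inv r * (e * r) := by rw [(hinv r).2]
      _ = inv r * e * r := by rw [mul_assoc]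
  simp only [hS0, Set.mem_setOf_eq]
  constructor
  · intro s hs t ht e he hne
    constructor
    · intro h0
      have key : (s * t) * e * inv (s * t) = 0 := by
        rw [← gen1 (s * t) e]; exact hz3 _ _ _ h0
      rw [hinvmul] at key
      have key2 : s * (t * e * inv t) * inv s = 0 := by
        rw [show s * (t * e * inv t) * inv s = (s * t) * e * (inv t * inv s) by
          simp only [mul_assoc]]
        exact key
      exact (hcne s hs _ (hconj_idem t e he) ((hcne t ht e he hne).1)).1 key2
    · intro h0
      have key : inv (s * t) * e * (s * t) = 0 := by
        rw [← gen2 (s * t) e]; exact hz3 _ _ _ h0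
      rw [hinvmul] at key
      have key2 : inv t * (inv s * e * s) * t = 0 := by
        rw [show inv t * (inv s * e * s) * t = (inv t * inv s) * e * (s * t) by
          simp only [mul_assoc]]
        exact key
      have hid : (inv s * e * s) * (inv s * e * s) = inv s * e * s := by
        have := hconj_idem (inv s) e he
        rwa [hii s] at this
      exact (hcne t ht _ hid ((hcne s hs e he hne).2)).2 key2
  · intro s hs e he hne
    rw [hii s]
    exact ⟨(hs e he hne).2, (hs e he hne).1⟩
end

section
/- Let (G, X) be a self-similar group with X finite, and let X* ⋈ G be the Zappa–Szép product monoid with multiplication (α, g)(β, h) = (α (g·β), (g|_β) h). If (α, g) and (α', h) meet in X* ⋈ G (i.e., some (γ,k) satisfies (α,g)(γ,k) = (α',h)(γ,k)), then α = α' and γ is strongly fixed by g^{-1}h, i.e., (g^{-1}h)·γ = γ and (g^{-1}h)|_γ = 1_G. -/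
/-- A self-similar group `(G, X)`: a length-preserving action of `G` on the free
monoid `X*` (words modeled as lists) together with restriction maps, satisfying the
self-similarity identities `g·(uv) = (g·u)(g|_u · v)`, `g|_{uv} = (g|_u)|_v`, etc. -/
structure SelfSimilar (G X : Type*) [Group G] where
  act : G → List X → List X
  res : G → List X → G
  length_act : ∀ (g : G) (w : List X), (act g w).length = w.length
  act_one : ∀ w : List X, act 1 w = w
  act_mul : ∀ (g h : G) (w : List X), act (g * h) w = act g (act h w)
  act_append : ∀ (g : G) (u v : List X), act g (u ++ v) = act g u ++ act (res g u) v
  res_nil : ∀ g : G, res g [] = g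
  res_append : ∀ (g : G) (u v : List X), res g (u ++ v) = res (res g u) v
  res_one : ∀ w : List X, res 1 w = 1
  res_mul : ∀ (g h : G) (w : List X), res (g * h) w = res g (act h w) * res h w

/-- The multiplication of the Zappa–Szép product `X* ⋈ G`:
`(α, g)(β, h) = (α (g·β), (g|_β) h)`. -/
def zmul {G X : Type*} [Group G] (SS : SelfSimilar G X) (x y : List X × G) : List X × G :=
  (x.1 ++ SS.act x.2 y.1, SS.res x.2 y.1 * y.2)

/-- If `(α, g)` and `(α', h)` meet in `X* ⋈ G`, i.e. `(α,g)(γ,k) = (α',h)(γ,k)` for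
some `(γ,k)`, then `α = α'` and `γ` is strongly fixed by `g⁻¹h`. -/
theorem stmt16 {G X : Type*} [Group G] (SS : SelfSimilar G X)
    (α α' γ : List X) (g h k : G)
    (hmeet : zmul SS (α, g) (γ, k) = zmul SS (α', h) (γ, k)) :
    α = α' ∧ SS.act (g⁻¹ * h) γ = γ ∧ SS.res (g⁻¹ * h) γ = 1 := by
  simp only [zmul, Prod.mk.injEq] at hmeet
  obtain ⟨h1, h2⟩ := hmeet
  have hres : SS.res g γ = SS.res h γ := mul_right_cancel h2
  have hlen : (SS.act g γ).length = (SS.act h γ).length := by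
    rw [SS.length_act, SS.length_act]
  have hα : α = α' := by
    have := congrArg List.length h1
    simp [SS.length_act] at this
    exact List.append_inj_left h1 this
  have hact : SS.act g γ = SS.act h γ := by
    rw [hα] at h1; exact List.append_cancel_left h1
  have hfix : SS.act (g⁻¹ * h) γ = γ := by
    rw [SS.act_mul, ← hact, ← SS.act_mul, inv_mul_cancel, SS.act_one]
  refine ⟨hα, hfix, ?_⟩
  have key : SS.res g⁻¹ (SS.act g γ) * SS.res g γ = 1 := by
    rw [← SS.res_mul, inv_mul_cancel, SS.res_one]
  rw [SS.res_mul, ← hact, ← hres]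
  exact key
end

section
/- Let (G, X) be a self-similar group and g ∈ G. Suppose there is a finite set F of words strongly fixed by g such that every word strongly fixed by g has a common right extension with some element of F (i.e., for all α ∈ SF_g there is β ∈ F with βX* ∩ αX* ≠ ∅). Then the set MSF_g of minimal strongly fixed words of g is finite. Conversely, if MSF_g is finite then such a finite set F exists. -/
/-- The principal right ideal `αX*` of the free monoid of words over `X`. -/
def rIw {X : Type*} (α : List X) : Set (List X) := {w | ∃ v, w = α ++ v}

/-- The set of words strongly fixed by `g`: `g·α = α` and `g|_α = 1`. -/
def SF {G X : Type*} [Group G] (SS : SelfSimilar G X) (g : G) : Set (List X) :=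
  {α | SS.act g α = α ∧ SS.res g α = 1}

/-- The set of minimal strongly fixed words of `g`: strongly fixed words no proper
prefix of which is strongly fixed. -/
def MSF {G X : Type*} [Group G] (SS : SelfSimilar G X) (g : G) : Set (List X) :=
  {α | α ∈ SF SS g ∧ ∀ β : List X, β <+: α → β ≠ α → β ∉ SF SS g}

lemma sf_append {G X : Type*} [Group G] (SS : SelfSimilar G X) (g : G)
    {α : List X} (hα : α ∈ SF SS g) (γ : List X) : α ++ γ ∈ SF SS g := by
  obtain ⟨h1, h2⟩ := hα
  constructor
  · rw [SS.act_append, h1, h2, SS.act_one]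
  · rw [SS.res_append, h2, SS.res_one]

lemma exists_msf_prefix {G X : Type*} [Group G] (SS : SelfSimilar G X) (g : G)
    {α : List X} (hα : α ∈ SF SS g) : ∃ β ∈ MSF SS g, β <+: α := by
  classical
  have hex : ∃ n, ∃ β : List X, β <+: α ∧ β ∈ SF SS g ∧ β.length = n :=
    ⟨α.length, α, List.prefix_refl α, hα, rfl⟩
  obtain ⟨β, hpre, hsf, hlen⟩ := Nat.find_spec hex
  refine ⟨β, ⟨hsf, ?_⟩, hpre⟩
  intro γ hγβ hne hγsf
  have hlt : γ.length < β.length := by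
    rcases lt_or_eq_of_le hγβ.length_le with h | h
    · exact h
    · exact absurd (hγβ.eq_of_length h) hne
  rw [hlen] at hlt
  exact Nat.find_min hex hlt ⟨γ, hγβ.trans hpre, hγsf, rfl⟩

/-- There is a finite set `F` of strongly fixed words of `g` such that every strongly
fixed word of `g` has a common right multiple with some member of `F`, if and only if
the set of minimal strongly fixed words of `g` is finite. -/
theorem stmt18 {G X : Type*} [Group G] (SS : SelfSimilar G X) (g : G) :
    (∃ F : Finset (List X), (∀ β ∈ F, β ∈ SF SS g) ∧
      ∀ α ∈ SF SS g, ∃ β ∈ F, (rIw β ∩ rIw α) ≠ ∅) ↔ (MSF SS g).Finite := by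
  classical
  constructor
  · rintro ⟨F, hFsf, hF⟩
    have hsub : MSF SS g ⊆ ↑(F.biUnion (fun β => (Finset.range (β.length + 1)).image β.take)) := by
      intro α hα
      obtain ⟨β, hβF, hne⟩ := hF α hα.1
      obtain ⟨w, ⟨u, hu⟩, v, hv⟩ := Set.nonempty_iff_ne_empty.mpr hne
      have hβw : β <+: w := ⟨u, hu.symm⟩
      have hαw : α <+: w := ⟨v, hv.symm⟩
      have hcomp := List.prefix_or_prefix_of_prefix hβw hαw
      have hαβ : α <+: β := by
        rcases hcomp with h | h
        · rcases eq_or_ne β α with he | hne'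
          · exact he ▸ List.prefix_refl β
          · exact absurd (hFsf β hβF) (hα.2 β h hne')
        · exact h
      simp only [Finset.coe_biUnion, Set.mem_iUnion, Finset.mem_coe, Finset.mem_image,
        Finset.mem_range]
      exact ⟨β, hβF, α.length, Nat.lt_succ_of_le hαβ.length_le,
        (List.prefix_iff_eq_take.mp hαβ).symm⟩
    exact Set.Finite.subset (F.biUnion _).finite_toSet hsub
  · intro hfin
    refine ⟨hfin.toFinset, ?_, ?_⟩
    · intro β hβ
      exact (hfin.mem_toFinset.mp hβ).1
    · intro α hα
      obtain ⟨β, hβ, v, hv⟩ := exists_msf_prefix SS g hα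
      refine ⟨β, hfin.mem_toFinset.mpr hβ, ?_⟩
      rw [← Set.nonempty_iff_ne_empty]
      exact ⟨α, ⟨v, hv.symm⟩, [], by simp⟩
end
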